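/- Let α = (α_i)_{i≥0} and β = (β_i)_{i≥0} be two sequences of complex numbers with α_0 = β_0. Then for every positive integer n, the generalized Pascal triangle satisfies the factorization P_{α,β}(n) = L(n) · T_{α̂,β̂}(n) · U(n), where L(n) is the n×n lower triangular matrix with entries L_{i,j} = binomial(i,j) for i ≥ j and 0 otherwise, U(n) = L(n)^t, and α̂, β̂ are the binomial inverse transforms of α, β. -/

import Mathlib

open Matrix

/-- Entry `P_{i,j}` of the generalized Pascal triangle associated to sequences `α`, `β`:
`P_{i,0} = α i`, `P_{0,j} = β j`, and `P_{i,j} = P_{i-1,j} + P_{i,j-1}` for `i, j ≥ 1`. -/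
def pascalEntry {R : Type*} [CommRing R] (α β : ℕ → R) : ℕ → ℕ → R
  | i, 0 => α i
  | 0, j + 1 => β (j + 1)
  | i + 1, j + 1 => pascalEntry α β i (j + 1) + pascalEntry α β (i + 1) j

/-- The generalized Pascal triangle `P_{α,β}(n)`. -/
def genPascal {R : Type*} [CommRing R] (α β : ℕ → R) (n : ℕ) :
    Matrix (Fin n) (Fin n) R :=
  Matrix.of fun i j => pascalEntry α β (i : ℕ) (j : ℕ)

/-- The Töplitz matrix `T_{α,β}(n)`: `t_{i,j} = α_{i-j}` if `i ≥ j`, else `β_{j-i}`. -/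
def toeplitz {R : Type*} [CommRing R] (α β : ℕ → R) (n : ℕ) :
    Matrix (Fin n) (Fin n) R :=
  Matrix.of fun i j => if (j : ℕ) ≤ (i : ℕ) then α ((i : ℕ) - (j : ℕ)) else β ((j : ℕ) - (i : ℕ))

/-- The unipotent lower triangular matrix `L(n)` with `L_{i,j} = C(i,j)` for `i ≥ j`. -/
def lowerL (R : Type*) [CommRing R] (n : ℕ) : Matrix (Fin n) (Fin n) R :=
  Matrix.of fun i j => if (j : ℕ) ≤ (i : ℕ) then ((i : ℕ).choose (j : ℕ) : R) else 0

/-- The binomial inverse transform `α̂_i = ∑_{k=0}^{i} (-1)^{i+k} C(i,k) α_k`. -/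
def hatSeq {R : Type*} [CommRing R] (α : ℕ → R) (i : ℕ) : R :=
  ∑ k ∈ Finset.range (i + 1), (-1 : R) ^ (i + k) * (i.choose k : R) * α k

/-- The binomial transform `α̌_i = ∑_{k=0}^{i} C(i,k) α_k`. -/
def checkSeq {R : Type*} [CommRing R] (α : ℕ → R) (i : ℕ) : R :=
  ∑ k ∈ Finset.range (i + 1), (i.choose k : R) * α k

namespace GPHelper

open Finset

lemma inner_eval (i m : ℕ) (hm : m ≤ i) :
    ∑ k ∈ range (i + 1), (i.choose k : ℂ) * ((-1 : ℂ) ^ (k + m) * (k.choose m : ℂ)) =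
      if m = i then 1 else 0 := by
  have h1 : ∑ k ∈ range (i + 1), (i.choose k : ℂ) * ((-1 : ℂ) ^ (k + m) * (k.choose m : ℂ)) =
      ∑ k ∈ Ico m (i + 1), (i.choose k : ℂ) * ((-1 : ℂ) ^ (k + m) * (k.choose m : ℂ)) := by
    rw [range_eq_Ico]
    refine (Finset.sum_subset (Ico_subset_Ico (Nat.zero_le m) le_rfl) ?_).symm
    intro k hk hk'
    simp only [mem_Ico] at hk hk'
    have : k < m := by omega
    rw [Nat.choose_eq_zero_of_lt this]
    simp
  rw [h1, Finset.sum_Ico_eq_sum_range]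
  have h2 : ∀ d ∈ range (i + 1 - m), (i.choose (m + d) : ℂ) * ((-1 : ℂ) ^ (m + d + m) * ((m + d).choose m : ℂ)) =
      (i.choose m : ℂ) * ((-1 : ℂ) ^ d * ((i - m).choose d : ℂ)) := by
    intro d hd
    simp only [mem_range] at hd
    have hkn : m + d ≤ i := by omega
    have := Nat.choose_mul (n := i) (Nat.le_add_right m d)
    have hc : (i.choose (m + d) : ℂ) * ((m + d).choose m : ℂ) = (i.choose m : ℂ) * ((i - m).choose (m + d - m) : ℂ) := by
      exact_mod_cast congrArg (Nat.cast : ℕ → ℂ) this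
    have hsub : m + d - m = d := by omega
    rw [hsub] at hc
    have hpow : (-1 : ℂ) ^ (m + d + m) = (-1 : ℂ) ^ d := by
      rw [show m + d + m = d + 2 * m by ring, pow_add, pow_mul]
      simp
    rw [hpow]
    ring_nf
    ring_nf at hc
    linear_combination ((-1:ℂ))^d * hc
  rw [Finset.sum_congr rfl h2, ← Finset.mul_sum]
  have h3 : ∑ d ∈ range (i + 1 - m), (-1 : ℂ) ^ d * ((i - m).choose d : ℂ) =
      if i - m = 0 then 1 else 0 := by
    have : i + 1 - m = (i - m) + 1 := by omega
    rw [this]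
    exact_mod_cast congrArg (Int.cast : ℤ → ℂ) (Int.alternating_sum_range_choose (n := i - m))
  rw [h3]
  by_cases hmi : m = i
  · subst hmi; simp
  · have : i - m ≠ 0 := by omega
    simp [hmi, this]

lemma binom_inv (γ : ℕ → ℂ) (i : ℕ) :
    ∑ k ∈ range (i + 1), (i.choose k : ℂ) * hatSeq γ k = γ i := by
  simp only [hatSeq]
  have hext : ∀ k ∈ range (i + 1),
      (i.choose k : ℂ) * ∑ m ∈ range (k + 1), (-1 : ℂ) ^ (k + m) * (k.choose m : ℂ) * γ m =
      ∑ m ∈ range (i + 1), (i.choose k : ℂ) * ((-1 : ℂ) ^ (k + m) * (k.choose m : ℂ) * γ m) := by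
    intro k hk
    simp only [mem_range] at hk
    rw [Finset.mul_sum]
    refine Finset.sum_subset (by intro x hx; simp only [mem_range] at *; omega) ?_
    intro m hm hm'
    simp only [mem_range] at hm hm'
    rw [Nat.choose_eq_zero_of_lt (show k < m by omega)]
    simp
  rw [Finset.sum_congr rfl hext, Finset.sum_comm]
  have : ∀ m ∈ range (i + 1),
      ∑ k ∈ range (i + 1), (i.choose k : ℂ) * ((-1 : ℂ) ^ (k + m) * (k.choose m : ℂ) * γ m) =
      (if m = i then 1 else 0) * γ m := by
    intro m hm
    simp only [mem_range] at hm
    rw [← inner_eval i m (by omega), Finset.sum_mul]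
    congr 1; ext k; ring
  rw [Finset.sum_congr rfl this]
  simp

/-- Toeplitz entry as a function of natural indices. -/
noncomputable def tE (α β : ℕ → ℂ) (k l : ℕ) : ℂ :=
  if l ≤ k then hatSeq α (k - l) else hatSeq β (l - k)

lemma tE_shift (α β : ℕ → ℂ) (k l : ℕ) : tE α β (k + 1) (l + 1) = tE α β k l := by
  unfold tE
  by_cases h : l ≤ k
  · rw [if_pos (by omega), if_pos h]
    congr 1; omega
  · rw [if_neg (by omega), if_neg h]
    congr 1; omega

/-- The candidate entry: `(L T Lᵀ)_{i,j}` written as a double natural sum. -/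
noncomputable def Q (α β : ℕ → ℂ) (i j : ℕ) : ℂ :=
  ∑ k ∈ range (i + 1), (i.choose k : ℂ) * ∑ l ∈ range (j + 1), (j.choose l : ℂ) * tE α β k l

lemma pascal_step (g : ℕ → ℂ) (i : ℕ) :
    ∑ k ∈ range (i + 1 + 1), ((i + 1).choose k : ℂ) * g k =
      ∑ k ∈ range (i + 1), (i.choose k : ℂ) * g k +
      ∑ k ∈ range (i + 1), (i.choose k : ℂ) * g (k + 1) := by
  have key := Finset.sum_range_succ' (fun k => ((i + 1).choose k : ℂ) * g k) (i + 1)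
  have h1 : ∀ k ∈ range (i + 1),
      ((i + 1).choose (k + 1) : ℂ) * g (k + 1) =
        (i.choose k : ℂ) * g (k + 1) + (i.choose (k + 1) : ℂ) * g (k + 1) := by
    intro k _
    rw [Nat.choose_succ_succ]
    push_cast
    ring
  rw [key, Finset.sum_congr rfl h1, Finset.sum_add_distrib]
  have key2 := Finset.sum_range_succ' (fun k => (i.choose k : ℂ) * g k) i
  -- key2 : ∑ k ∈ range (i+1), C(i,k) g k = ∑ k ∈ range i, C(i,k+1) g (k+1) + C(i,0) g 0
  have key3 : ∑ k ∈ range (i + 1), (i.choose (k + 1) : ℂ) * g (k + 1) =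
      ∑ k ∈ range i, (i.choose (k + 1) : ℂ) * g (k + 1) := by
    rw [Finset.sum_range_succ, Nat.choose_succ_self]
    simp
  rw [key3]
  simp only [Nat.choose_zero_right, Nat.cast_one, one_mul] at key2 ⊢
  linear_combination -key2

lemma Q_rec (α β : ℕ → ℂ) (i j : ℕ) :
    Q α β (i + 1) (j + 1) = Q α β i (j + 1) + Q α β (i + 1) j := by
  unfold Q
  have hg : ∀ k, ∑ l ∈ range (j + 1 + 1), ((j + 1).choose l : ℂ) * tE α β k l =
      (∑ l ∈ range (j + 1), (j.choose l : ℂ) * tE α β k l) +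
      ∑ l ∈ range (j + 1), (j.choose l : ℂ) * tE α β k (l + 1) :=
    fun k => pascal_step (fun l => tE α β k l) j
  have hshift : ∀ k, ∑ l ∈ range (j + 1), (j.choose l : ℂ) * tE α β (k + 1) (l + 1) =
      ∑ l ∈ range (j + 1), (j.choose l : ℂ) * tE α β k l := by
    intro k
    exact Finset.sum_congr rfl fun l _ => by rw [tE_shift]
  rw [pascal_step (fun k => ∑ l ∈ range (j + 1 + 1), ((j + 1).choose l : ℂ) * tE α β k l) i,
    pascal_step (fun k => ∑ l ∈ range (j + 1), (j.choose l : ℂ) * tE α β k l) i]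
  have hA : ∀ k ∈ range (i + 1),
      (i.choose k : ℂ) * ∑ l ∈ range (j + 1 + 1), ((j + 1).choose l : ℂ) * tE α β k l =
      (i.choose k : ℂ) * (∑ l ∈ range (j + 1), (j.choose l : ℂ) * tE α β k l) +
      (i.choose k : ℂ) * ∑ l ∈ range (j + 1), (j.choose l : ℂ) * tE α β k (l + 1) := by
    intro k _
    rw [hg k]
    ring
  have hB : ∀ k ∈ range (i + 1),
      (i.choose k : ℂ) * ∑ l ∈ range (j + 1 + 1), ((j + 1).choose l : ℂ) * tE α β (k + 1) l =
      (i.choose k : ℂ) * (∑ l ∈ range (j + 1), (j.choose l : ℂ) * tE α β (k + 1) l) +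
      (i.choose k : ℂ) * ∑ l ∈ range (j + 1), (j.choose l : ℂ) * tE α β k l := by
    intro k _
    rw [hg (k + 1), hshift k]
    ring
  rw [Finset.sum_congr rfl hA, Finset.sum_congr rfl hB, Finset.sum_add_distrib,
    Finset.sum_add_distrib]
  ring

lemma Q_i0 (α β : ℕ → ℂ) (i : ℕ) : Q α β i 0 = α i := by
  unfold Q
  have : ∀ k ∈ range (i + 1),
      (i.choose k : ℂ) * ∑ l ∈ range (0 + 1), ((0 : ℕ).choose l : ℂ) * tE α β k l =
      (i.choose k : ℂ) * hatSeq α k := by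
    intro k _
    simp [tE]
  rw [Finset.sum_congr rfl this, binom_inv]

lemma Q_0j (α β : ℕ → ℂ) (h : α 0 = β 0) (j : ℕ) : Q α β 0 j = β j := by
  unfold Q
  have htE0 : ∀ l, tE α β 0 l = hatSeq β l := by
    intro l
    cases l with
    | zero => simp [tE, hatSeq, h]
    | succ m => simp [tE]
  simp only [zero_add, Finset.sum_range_one, Nat.choose_self, Nat.cast_one, one_mul]
  rw [Finset.sum_congr rfl fun l _ => by rw [htE0 l]]
  exact binom_inv β j

lemma pe1 (α β : ℕ → ℂ) (i : ℕ) : pascalEntry α β i 0 = α i := by simp [pascalEntry]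

lemma pe2 (α β : ℕ → ℂ) (j : ℕ) : pascalEntry α β 0 (j + 1) = β (j + 1) := by simp [pascalEntry]

lemma pe3 (α β : ℕ → ℂ) (i j : ℕ) :
    pascalEntry α β (i + 1) (j + 1) = pascalEntry α β i (j + 1) + pascalEntry α β (i + 1) j := by
  simp [pascalEntry]

lemma pascal_eq_Q (α β : ℕ → ℂ) (h : α 0 = β 0) : ∀ i j, pascalEntry α β i j = Q α β i j := by
  intro i
  induction i with
  | zero =>
    intro j
    cases j with
    | zero => rw [Q_0j α β h 0, pe1]; exact h
    | succ j => rw [Q_0j α β h (j + 1), pe2]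
  | succ i ih =>
    intro j
    induction j with
    | zero => rw [Q_i0, pe1]
    | succ j ihj => rw [pe3, ih (j + 1), ihj, Q_rec]

end GPHelper

open GPHelper Finset in
/-- `P_{α,β}(n) = L(n) · T_{α̂,β̂}(n) · U(n)` where `U(n) = L(n)ᵀ`. -/
theorem genPascal_factorization (α β : ℕ → ℂ) (h : α 0 = β 0) (n : ℕ) (hn : 0 < n) :
    genPascal α β n = lowerL ℂ n * toeplitz (hatSeq α) (hatSeq β) n * (lowerL ℂ n)ᵀ := by
  ext i j
  rw [genPascal, Matrix.of_apply, pascal_eq_Q α β h]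
  simp only [Matrix.mul_apply, Matrix.transpose_apply, lowerL, toeplitz, Matrix.of_apply]
  have hT : ∀ (k l : Fin n),
      (if (l : ℕ) ≤ (k : ℕ) then hatSeq α ((k : ℕ) - (l : ℕ)) else hatSeq β ((l : ℕ) - (k : ℕ)))
        = tE α β (k : ℕ) (l : ℕ) := fun k l => rfl
  simp only [hT]
  rw [Fin.sum_univ_eq_sum_range (fun l =>
    (∑ k : Fin n, (if (k : ℕ) ≤ (i : ℕ) then ((i : ℕ).choose (k : ℕ) : ℂ) else 0) * tE α β (k : ℕ) l) *
      (if l ≤ (j : ℕ) then ((j : ℕ).choose l : ℂ) else 0)) n]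
  have hin : ∀ l : ℕ,
      (∑ k : Fin n, (if (k : ℕ) ≤ (i : ℕ) then ((i : ℕ).choose (k : ℕ) : ℂ) else 0) * tE α β (k : ℕ) l)
        = ∑ k ∈ range n, (if k ≤ (i : ℕ) then ((i : ℕ).choose k : ℂ) else 0) * tE α β k l := by
    intro l
    exact Fin.sum_univ_eq_sum_range (fun k => (if k ≤ (i : ℕ) then ((i : ℕ).choose k : ℂ) else 0) * tE α β k l) n
  simp only [hin]
  -- restrict outer sum to range (j+1)
  rw [show (∑ l ∈ range n,
      (∑ k ∈ range n, (if k ≤ (i : ℕ) then ((i : ℕ).choose k : ℂ) else 0) * tE α β k l) *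
        (if l ≤ (j : ℕ) then ((j : ℕ).choose l : ℂ) else 0)) =
      ∑ l ∈ range ((j : ℕ) + 1),
      (∑ k ∈ range n, (if k ≤ (i : ℕ) then ((i : ℕ).choose k : ℂ) else 0) * tE α β k l) *
        (if l ≤ (j : ℕ) then ((j : ℕ).choose l : ℂ) else 0) from
    (Finset.sum_subset (by intro x hx; simp only [mem_range] at *; omega) (by
      intro l hl hl'
      simp only [mem_range] at hl hl'
      rw [if_neg (by omega), mul_zero])).symm]
  have hkres : ∀ l ∈ range ((j : ℕ) + 1),
      (∑ k ∈ range n, (if k ≤ (i : ℕ) then ((i : ℕ).choose k : ℂ) else 0) * tE α β k l) *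
        (if l ≤ (j : ℕ) then ((j : ℕ).choose l : ℂ) else 0) =
      (∑ k ∈ range ((i : ℕ) + 1), ((i : ℕ).choose k : ℂ) * tE α β k l) * ((j : ℕ).choose l : ℂ) := by
    intro l hl
    simp only [mem_range] at hl
    rw [if_pos (by omega)]
    congr 1
    rw [show (∑ k ∈ range n, (if k ≤ (i : ℕ) then ((i : ℕ).choose k : ℂ) else 0) * tE α β k l) =
        ∑ k ∈ range ((i : ℕ) + 1), (if k ≤ (i : ℕ) then ((i : ℕ).choose k : ℂ) else 0) * tE α β k l from
      (Finset.sum_subset (by intro x hx; simp only [mem_range] at *; omega) (by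
        intro k hk hk'
        simp only [mem_range] at hk hk'
        rw [if_neg (by omega), zero_mul])).symm]
    exact Finset.sum_congr rfl fun k hk => by
      simp only [mem_range] at hk
      rw [if_pos (by omega)]
  rw [Finset.sum_congr rfl hkres]
  unfold Q
  have hswap : ∑ l ∈ range ((j : ℕ) + 1),
      (∑ k ∈ range ((i : ℕ) + 1), ((i : ℕ).choose k : ℂ) * tE α β k l) * ((j : ℕ).choose l : ℂ) =
      ∑ k ∈ range ((i : ℕ) + 1), ((i : ℕ).choose k : ℂ) *
        ∑ l ∈ range ((j : ℕ) + 1), ((j : ℕ).choose l : ℂ) * tE α β k l := by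
    rw [Finset.sum_congr rfl fun l _ => Finset.sum_mul _ _ _, Finset.sum_comm]
    exact Finset.sum_congr rfl fun k _ => by
      rw [Finset.mul_sum]
      exact Finset.sum_congr rfl fun l _ => by ring
  rw [hswap]
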